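/- For all integers Δ ≥ 3 and p ≥ 1, there exists a finite tree T with maximum degree at most Δ such that χ(T^p) ≥ (Δ·(Δ−1)^{⌊p/2⌋} − 2)/(Δ−2), where χ denotes the chromatic number. -/

import Mathlib

/-- The `p`-th power of a graph: vertices are adjacent iff distinct and at distance at most `p`. -/
def graphPow {V : Type*} (G : SimpleGraph V) (p : ℕ) : SimpleGraph V where
  Adj x y := x ≠ y ∧ G.Reachable x y ∧ G.dist x y ≤ p
  symm := ⟨by
    rintro x y ⟨hxy, hr, hd⟩
    exact ⟨hxy.symm, hr.symm, by rwa [SimpleGraph.dist_comm]⟩⟩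
  loopless := ⟨by rintro x ⟨h, -⟩; exact h rfl⟩

/-- Maximum average degree: max over nonempty subgraphs of 2|E(H)|/|V(H)|. -/
noncomputable def mad {V : Type*} (G : SimpleGraph V) : ℝ :=
  sSup { x : ℝ | ∃ H : G.Subgraph, H.verts.Nonempty ∧
    x = 2 * H.edgeSet.ncard / H.verts.ncard }

/-- Coloring number: min over linear orders (injections into ℕ) of max back-closed-neighborhood size. -/
noncomputable def col {V : Type*} [Fintype V] (G : SimpleGraph V) : ℕ :=
  sInf { n : ℕ | ∃ σ : V ↪ ℕ,
    ∀ x : V, ({ y : V | σ y ≤ σ x ∧ (y = x ∨ G.Adj x y) }).ncard ≤ n }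

/-- Weak `k`-coloring number. -/
noncomputable def wcol {V : Type*} [Fintype V] (G : SimpleGraph V) (k : ℕ) : ℕ :=
  sInf { n : ℕ | ∃ σ : V ↪ ℕ, ∀ x : V,
    ({ y : V | σ y ≤ σ x ∧ ∃ P : G.Walk x y, P.length ≤ k ∧
        ∀ z ∈ P.support, σ y ≤ σ z }).ncard ≤ n }

/-- Arboricity: the minimum number of forests needed to cover all edges of `G`. -/
noncomputable def arb {V : Type*} (G : SimpleGraph V) : ℕ :=
  sInf { n : ℕ | ∃ f : Fin n → SimpleGraph V, (∀ i, (f i).IsAcyclic ∧ f i ≤ G) ∧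
    ∀ e ∈ G.edgeSet, ∃ i, e ∈ (f i).edgeSet }

/-- Out-weight of a vertex under a weighting of edge orientations. -/
def outWeight {V : Type*} [Fintype V] (G : SimpleGraph V) [DecidableRel G.Adj]
    (w : V → V → ℝ) (u : V) : ℝ :=
  ∑ v ∈ G.neighborFinset u, w u v

/-- `w` is a weak orientation of `G`. -/
def IsWeakOrientation {V : Type*} (G : SimpleGraph V) (w : V → V → ℝ) : Prop :=
  ∀ u v, G.Adj u v → 0 ≤ w u v ∧ w u v + w v u = 1

/-- Maximum out-weight. -/
noncomputable def maxOutWeight {V : Type*} [Fintype V] [Nonempty V] (G : SimpleGraph V)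
    [DecidableRel G.Adj] (w : V → V → ℝ) : ℝ :=
  Finset.univ.sup' Finset.univ_nonempty (outWeight G w)

open SimpleGraph

namespace Stmt11Aux

variable {VV : Type*} {G : SimpleGraph VV}

lemma getVert_mem_support {u v : VV} (p : G.Walk u v) (i : ℕ) :
    p.getVert i ∈ p.support := by
  induction p generalizing i with
  | nil => cases i <;> simp [SimpleGraph.Walk.getVert]
  | cons h q ih =>
    cases i with
    | zero => simp [SimpleGraph.Walk.getVert]
    | succ j => simp only [SimpleGraph.Walk.getVert, SimpleGraph.Walk.support_cons,
        List.mem_cons]; exact Or.inr (ih j)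

lemma edge_getVert_mem_edges {u v : VV} (p : G.Walk u v) {i : ℕ} (hi : i < p.length) :
    s(p.getVert i, p.getVert (i + 1)) ∈ p.edges := by
  induction p generalizing i with
  | nil => simp at hi
  | cons h q ih =>
    cases i with
    | zero => simp [SimpleGraph.Walk.getVert]
    | succ j =>
      simp only [SimpleGraph.Walk.getVert, SimpleGraph.Walk.edges_cons, List.mem_cons]
      exact Or.inr (ih (by simpa [SimpleGraph.Walk.length_cons] using hi))

/-! The complete tree. `a` = arity at root, `b` = arity elsewhere, `r` = radius. -/

def B (b r : ℕ) : Type := {l : List (Fin b) // l.length < r}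

def V (a b r : ℕ) : Type := Option (Fin a × B b r)

instance {b r : ℕ} : DecidableEq (B b r) := by delta B; infer_instance
instance {a b r : ℕ} : DecidableEq (V a b r) := by delta V; infer_instance

def depth {a b r : ℕ} : V a b r → ℕ
  | none => 0
  | some (_, l) => l.1.length + 1

def parent {a b r : ℕ} : V a b r → Option (V a b r)
  | none => none
  | some (_, ⟨[], _⟩) => some none
  | some (i, ⟨c :: l, h⟩) => some (some (i, ⟨l, Nat.lt_of_succ_lt h⟩))

lemma depth_parent {a b r : ℕ} {x y : V a b r} (h : parent x = some y) :
    depth x = depth y + 1 := by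
  match x with
  | none => simp [parent] at h
  | some (i, ⟨[], hl⟩) =>
      simp only [parent, Option.some.injEq] at h
      cases h; simp [depth]
  | some (i, ⟨c :: l, hl⟩) =>
      simp only [parent, Option.some.injEq] at h
      cases h; simp [depth]

def G0 (a b r : ℕ) : SimpleGraph (V a b r) where
  Adj x y := parent x = some y ∨ parent y = some x
  symm := ⟨fun x y h => h.symm⟩
  loopless := ⟨by
    intro x h
    have : depth x = depth x + 1 := by
      rcases h with h | h <;> exact depth_parent h
    omega⟩

lemma adj_parent {a b r : ℕ} {x y : V a b r} (h : (G0 a b r).Adj x y)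
    (hd : depth y ≤ depth x) : parent x = some y := by
  rcases h with h | h
  · exact h
  · have := depth_parent h
    omega

def toRootAux (a b r : ℕ) (i : Fin a) :
    (l : List (Fin b)) → (h : l.length < r) →
      (G0 a b r).Walk (some (i, ⟨l, h⟩)) none
  | [], h => .cons (Or.inl rfl) .nil
  | c :: l, h => .cons (Or.inl rfl) (toRootAux a b r i l (Nat.lt_of_succ_lt h))

def toRoot {a b r : ℕ} : (x : V a b r) → (G0 a b r).Walk x none
  | none => .nil
  | some (i, ⟨l, h⟩) => toRootAux a b r i l h

lemma toRootAux_length (a b r : ℕ) (i : Fin a) (l : List (Fin b)) (h : l.length < r) :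
    (toRootAux a b r i l h).length = l.length + 1 := by
  induction l with
  | nil => rfl
  | cons c l ih => exact congrArg (· + 1) (ih _)

lemma toRoot_length {a b r : ℕ} (x : V a b r) : (toRoot x).length = depth x := by
  match x with
  | none => rfl
  | some (i, ⟨l, h⟩) => simpa [toRoot, depth] using toRootAux_length a b r i l h

lemma depth_le {a b r : ℕ} (x : V a b r) : depth x ≤ r := by
  match x with
  | none => exact Nat.zero_le r
  | some (i, ⟨l, h⟩) => simpa [depth] using h

def walkBetween {a b r : ℕ} (x y : V a b r) : (G0 a b r).Walk x y :=
  (toRoot x).append (toRoot y).reverse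

lemma walkBetween_length {a b r : ℕ} (x y : V a b r) :
    (walkBetween x y).length = depth x + depth y := by
  exact (Walk.length_append _ _).trans (congrArg₂ (· + ·) (toRoot_length x)
    ((Walk.length_reverse _).trans (toRoot_length y)))

lemma G0_connected (a b r : ℕ) : (G0 a b r).Connected := by
  rw [connected_iff]
  exact ⟨fun x y => ⟨walkBetween x y⟩, ⟨none⟩⟩

lemma noCycleAt {a b r : ℕ} (x : V a b r) (c : (G0 a b r).Walk x x)
    (hc : c.IsCycle) (hmax : ∀ y ∈ c.support, depth y ≤ depth x) : False := by
  cases c with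
  | nil => exact hc.ne_nil rfl
  | @cons _ u _ h q =>
    have hl3 : 3 ≤ (SimpleGraph.Walk.cons h q).length := hc.three_le_length
    have hql : 2 ≤ q.length := by simpa [SimpleGraph.Walk.length_cons] using hl3
    have hu : parent x = some u :=
      adj_parent h (hmax u (by simp))
    set w := q.getVert (q.length - 1) with hw
    have hwx : q.getVert (q.length - 1 + 1) = x := by
      rw [Nat.sub_add_cancel (by omega)]; exact q.getVert_length
    have hadjwx : (G0 a b r).Adj w x := by
      have := q.adj_getVert_succ (i := q.length - 1) (by omega)
      rwa [hwx] at this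
    have hwmem : w ∈ q.support := getVert_mem_support q _
    have hpw : parent x = some w :=
      adj_parent hadjwx.symm (hmax w (by simp [SimpleGraph.Walk.support_cons, hwmem]))
    have huw : u = w := by
      have := hu.symm.trans hpw
      exact Option.some_injective _ this
    -- edge multiplicity contradiction
    have hedge : s(w, x) ∈ q.edges := by
      have := edge_getVert_mem_edges q (i := q.length - 1) (by omega)
      rwa [hwx] at this
    have hnodup : (SimpleGraph.Walk.cons h q).edges.Nodup := hc.edges_nodup
    rw [SimpleGraph.Walk.edges_cons, List.nodup_cons] at hnodup
    apply hnodup.1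
    rw [← huw] at hedge
    rwa [Sym2.eq_swap]

lemma G0_acyclic (a b r : ℕ) : (G0 a b r).IsAcyclic := by
  intro v c hc
  have hne : c.support.toFinset.Nonempty := by
    simp [List.toFinset_nonempty_iff, SimpleGraph.Walk.support_ne_nil]
  obtain ⟨x, hxmem, hmaxF⟩ := c.support.toFinset.exists_max_image depth hne
  rw [List.mem_toFinset] at hxmem
  have hmax : ∀ y ∈ c.support, depth y ≤ depth x := by
    intro y hy; exact hmaxF y (List.mem_toFinset.mpr hy)
  refine noCycleAt x (c.rotate (u := x) hxmem) (hc.rotate (u := x) hxmem) ?_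
  intro y hy
  have hperm := SimpleGraph.Walk.support_rotate c (u := x) hxmem
  rw [SimpleGraph.Walk.support_eq_cons, List.mem_cons] at hy
  rcases hy with rfl | hy
  · exact le_rfl
  · have : y ∈ c.support.tail := hperm.mem_iff.mp hy
    exact hmax y (List.mem_of_mem_tail this)

lemma G0_isTree (a b r : ℕ) : (G0 a b r).IsTree :=
  ⟨G0_connected a b r, G0_acyclic a b r⟩

def eB (b r : ℕ) : (Σ k : Fin r, List.Vector (Fin b) k) ≃ B b r where
  toFun := fun x => ⟨x.2.1, by rw [x.2.2]; exact x.1.2⟩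
  invFun := fun l => ⟨⟨l.1.length, l.2⟩, ⟨l.1, rfl⟩⟩
  left_inv := by
    rintro ⟨⟨k, hk⟩, ⟨l, hl⟩⟩
    obtain rfl : k = l.length := hl.symm
    rfl
  right_inv := by rintro ⟨l, hl⟩; rfl

instance {b r : ℕ} : Fintype (B b r) := Fintype.ofEquiv _ (eB b r)
instance {a b r : ℕ} : Fintype (V a b r) := by delta V; infer_instance

lemma card_B (b r : ℕ) : Fintype.card (B b r) = ∑ k ∈ Finset.range r, b ^ k := by
  rw [← Fintype.card_congr (eB b r), Fintype.card_sigma]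
  rw [← Fin.sum_univ_eq_sum_range (fun k => b ^ k) r]
  congr 1
  ext k
  rw [card_vector, Fintype.card_fin]

lemma card_V (a b r : ℕ) :
    Fintype.card (V a b r) = a * (∑ k ∈ Finset.range r, b ^ k) + 1 := by
  show Fintype.card (Option (Fin a × B b r)) = _
  rw [Fintype.card_option, Fintype.card_prod, Fintype.card_fin, card_B]

/-! Degree bounds -/

def hd {a b r : ℕ} : V a b r → Option (Fin b)
  | some (_, ⟨c :: _, _⟩) => some c
  | _ => none

def rootIdx {a b r : ℕ} : V a b r → Option (Fin a)
  | some (i, _) => some i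
  | none => none

lemma parent_eq_some_root {a b r : ℕ} {y : V a b r} (h : parent y = some none) :
    ∃ (i : Fin a) (h0 : ([] : List (Fin b)).length < r), y = some (i, ⟨[], h0⟩) := by
  match y with
  | none => simp [parent] at h
  | some (i, ⟨[], hl⟩) => exact ⟨i, hl, rfl⟩
  | some (i, ⟨c :: l, hl⟩) => simp [parent] at h; cases h

lemma parent_eq_some_some {a b r : ℕ} {y : V a b r} {i : Fin a} {l : List (Fin b)}
    {hl : l.length < r} (h : parent y = some (some (i, ⟨l, hl⟩))) :
    ∃ (c : Fin b) (hcl : (c :: l).length < r), y = some (i, ⟨c :: l, hcl⟩) := by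
  match y with
  | none => simp [parent] at h
  | some (j, ⟨[], h2⟩) => simp [parent] at h; cases h
  | some (j, ⟨c :: m, h2⟩) =>
      simp only [parent, Option.some.injEq, Prod.mk.injEq, Subtype.mk.injEq] at h
      obtain ⟨rfl, rfl⟩ := h
      exact ⟨c, h2, rfl⟩

lemma ncard_range_some {α : Type*} [Fintype α] :
    (Set.range (some : α → Option α)).ncard = Fintype.card α := by
  rw [← Set.image_univ, Set.ncard_image_of_injective _ (Option.some_injective α),
    Set.ncard_univ, Nat.card_eq_fintype_card]

lemma ncard_parentSet {a b r : ℕ} (x : V a b r) : {y | parent x = some y}.ncard ≤ 1 := by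
  cases hp : parent x with
  | none => simp
  | some z =>
    have : {y | (some z : Option (V a b r)) = some y} ⊆ {z} := by
      intro y hy
      simp only [Set.mem_setOf_eq, Option.some.injEq] at hy
      simp [hy]
    calc {y | (some z : Option (V a b r)) = some y}.ncard
        ≤ ({z} : Set (V a b r)).ncard := Set.ncard_le_ncard this (Set.finite_singleton z)
      _ = 1 := Set.ncard_singleton z

lemma ncard_children_root {a b r : ℕ} :
    {y : V a b r | parent y = some none}.ncard ≤ a := by
  have hinj : Set.InjOn rootIdx {y : V a b r | parent y = some none} := by
    intro y1 h1 y2 h2 he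
    obtain ⟨i1, h01, rfl⟩ := parent_eq_some_root h1
    obtain ⟨i2, h02, rfl⟩ := parent_eq_some_root h2
    simp only [rootIdx, Option.some.injEq] at he
    subst he
    rfl
  calc {y : V a b r | parent y = some none}.ncard
      = (rootIdx '' {y : V a b r | parent y = some none}).ncard :=
        (Set.ncard_image_of_injOn hinj).symm
    _ ≤ (Set.range (some : Fin a → Option (Fin a))).ncard := by
        apply Set.ncard_le_ncard _ (Set.toFinite _)
        rintro z ⟨y, hy, rfl⟩
        obtain ⟨i, h0, rfl⟩ := parent_eq_some_root hy
        exact ⟨i, rfl⟩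
    _ = a := by rw [ncard_range_some, Fintype.card_fin]

lemma ncard_children_some {a b r : ℕ} (i : Fin a) (l : List (Fin b)) (hl : l.length < r) :
    {y : V a b r | parent y = some (some (i, ⟨l, hl⟩))}.ncard ≤ b := by
  have hinj : Set.InjOn hd {y : V a b r | parent y = some (some (i, ⟨l, hl⟩))} := by
    intro y1 h1 y2 h2 he
    obtain ⟨c1, hc1, rfl⟩ := parent_eq_some_some h1
    obtain ⟨c2, hc2, rfl⟩ := parent_eq_some_some h2
    simp only [hd, Option.some.injEq] at he
    subst he
    rfl
  calc {y : V a b r | parent y = some (some (i, ⟨l, hl⟩))}.ncard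
      = (hd '' {y : V a b r | parent y = some (some (i, ⟨l, hl⟩))}).ncard :=
        (Set.ncard_image_of_injOn hinj).symm
    _ ≤ (Set.range (some : Fin b → Option (Fin b))).ncard := by
        apply Set.ncard_le_ncard _ (Set.toFinite _)
        rintro z ⟨y, hy, rfl⟩
        obtain ⟨c, hc, rfl⟩ := parent_eq_some_some hy
        exact ⟨c, rfl⟩
    _ = b := by rw [ncard_range_some, Fintype.card_fin]

lemma neighborSet_eq {a b r : ℕ} (x : V a b r) :
    (G0 a b r).neighborSet x = {y | parent x = some y} ∪ {y | parent y = some x} := by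
  ext y
  rfl

lemma ncard_neighborSet_le {a b r : ℕ} (x : V a b r) :
    ((G0 a b r).neighborSet x).ncard ≤ max a (b + 1) := by
  rw [neighborSet_eq]
  refine le_trans (Set.ncard_union_le _ _) ?_
  match x with
  | none =>
    have h1 : {y : V a b r | parent none = some y}.ncard = 0 := by
      simp [parent]
    rw [h1]
    exact (Nat.zero_add _).trans_le (le_trans ncard_children_root (le_max_left a (b+1)))
  | some (i, ⟨l, hl⟩) =>
    have := ncard_children_some i l hl
    have := ncard_parentSet (some (i, ⟨l, hl⟩) : V a b r)
    have hm : b + 1 ≤ max a (b + 1) := le_max_right a (b+1)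
    exact le_trans (Nat.add_le_add this (ncard_children_some i l hl)) (by omega)


/-! Arithmetic -/

lemma arith (q r : ℕ) :
    (q + 1) * ((q + 3) * (∑ k ∈ Finset.range r, (q + 2) ^ k) + 1) + 2
      = (q + 3) * (q + 2) ^ r := by
  induction r with
  | zero => simp
  | succ m ih =>
    rw [Finset.sum_range_succ, pow_succ]
    calc (q + 1) * ((q + 3) * ((∑ k ∈ Finset.range m, (q + 2) ^ k) + (q + 2) ^ m) + 1) + 2
        = ((q + 1) * ((q + 3) * (∑ k ∈ Finset.range m, (q + 2) ^ k) + 1) + 2)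
            + (q + 1) * ((q + 3) * (q + 2) ^ m) := by ring
      _ = (q + 3) * (q + 2) ^ m + (q + 1) * ((q + 3) * (q + 2) ^ m) := by rw [ih]
      _ = (q + 3) * ((q + 2) ^ m * (q + 2)) := by ring

end Stmt11Aux

open Stmt11Aux

/-- For all integers Δ ≥ 3 and p ≥ 1, there exists a finite tree T with maximum
degree at most Δ such that χ(T^p) ≥ (Δ·(Δ−1)^{⌊p/2⌋} − 2)/(Δ−2).  Since Δ − 2 > 0 and the
right-hand side is an exact integer, this is stated equivalently as
Δ·(Δ−1)^{⌊p/2⌋} − 2 ≤ (Δ−2)·χ(T^p). -/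
theorem stmt11 (Δ p : ℕ) (hΔ : 3 ≤ Δ) (hp : 1 ≤ p) :
    ∃ (n : ℕ) (T : SimpleGraph (Fin n)), T.IsTree ∧
      (∀ v, (T.neighborSet v).ncard ≤ Δ) ∧
      ((Δ * (Δ - 1) ^ (p / 2) - 2 : ℕ) : ℕ∞) ≤
        ((Δ - 2 : ℕ) : ℕ∞) * (graphPow T p).chromaticNumber := by
  obtain ⟨q, rfl⟩ : ∃ q, Δ = q + 3 := ⟨Δ - 3, by omega⟩
  set r := p / 2 with hrdef
  set n := Fintype.card (V (q + 3) (q + 2) r) with hndef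
  set e : V (q + 3) (q + 2) r ≃ Fin n := Fintype.equivFin _ with hedef
  set T : SimpleGraph (Fin n) := SimpleGraph.map e.toEmbedding (G0 (q + 3) (q + 2) r) with hTdef
  set φ : G0 (q + 3) (q + 2) r ≃g T := SimpleGraph.Iso.map e (G0 (q + 3) (q + 2) r) with hφdef
  have hφ_apply : ∀ x, φ x = e x := fun x => rfl
  have hT : T.IsTree := by
    constructor
    · exact (φ.connected_iff).mp (G0_connected _ _ _)
    · intro v c hc
      exact G0_acyclic _ _ _ (c.map φ.symm.toHom) (hc.map φ.symm.toEquiv.injective)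
  have hnb : ∀ v, (T.neighborSet v).ncard ≤ q + 3 := by
    intro v
    have hset : T.neighborSet v = e '' ((G0 (q + 3) (q + 2) r).neighborSet (e.symm v)) := by
      ext y
      constructor
      · rintro (⟨-, u', v', hadj, hu, hv⟩ : T.Adj v y)
        refine ⟨v', ?_, hv⟩
        have : u' = e.symm v := by rw [← hu]; simp
        rwa [this] at hadj
      · rintro ⟨z, hz, rfl⟩
        exact ⟨fun h => (G0 (q + 3) (q + 2) r).ne_of_adj hz (by rw [h, Equiv.symm_apply_apply]), e.symm v, z, hz, by simp, rfl⟩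
    rw [hset, Set.ncard_image_of_injective _ e.injective]
    have := ncard_neighborSet_le (a := q + 3) (b := q + 2) (r := r) (e.symm v)
    simpa using this
  refine ⟨n, T, hT, hnb, ?_⟩
  -- the power graph is complete
  have hclq : (graphPow T p).IsClique (Finset.univ : Finset (Fin n)) := by
    intro x _ y _ hxy
    refine ⟨hxy, ⟨((walkBetween (e.symm x) (e.symm y)).map φ.toHom).copy
        (e.apply_symm_apply x) (e.apply_symm_apply y)⟩, ?_⟩
    refine le_trans (SimpleGraph.dist_le (((walkBetween (e.symm x) (e.symm y)).map
      φ.toHom).copy (e.apply_symm_apply x) (e.apply_symm_apply y))) ?_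
    refine (SimpleGraph.Walk.length_copy _ _ _).trans_le ?_
    rw [SimpleGraph.Walk.length_map, walkBetween_length]
    have h1 := depth_le (e.symm x)
    have h2 := depth_le (e.symm y)
    have : 2 * r ≤ p := by omega
    omega
  have hχ : (n : ℕ∞) ≤ (graphPow T p).chromaticNumber := by
    have := hclq.card_le_chromaticNumber
    simpa using this
  have e1 : q + 3 - 1 = q + 2 := by omega
  have e2 : q + 3 - 2 = q + 1 := by omega
  rw [e1, e2]
  have hnat : (q + 3) * (q + 2) ^ r - 2 ≤ (q + 1) * n := by
    have hn : n = (q + 3) * (∑ k ∈ Finset.range r, (q + 2) ^ k) + 1 := card_V _ _ _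
    rw [hn]
    have h := arith q r
    set A := (q + 1) * ((q + 3) * (∑ k ∈ Finset.range r, (q + 2) ^ k) + 1) with hA
    set Bv := (q + 3) * (q + 2) ^ r with hB
    omega
  calc (((q + 3) * (q + 2) ^ r - 2 : ℕ) : ℕ∞)
      ≤ (((q + 1) * n : ℕ) : ℕ∞) := Nat.cast_le.mpr hnat
    _ = ((q + 1 : ℕ) : ℕ∞) * (n : ℕ∞) := by push_cast; ring
    _ ≤ ((q + 1 : ℕ) : ℕ∞) * (graphPow T p).chromaticNumber := mul_le_mul_right hχ _
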